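/- arXiv:2401.07317 — 6 statements merged into one kernel-verified Lean document; each statement's English description precedes it below -/
import Mathlib

section
/- For all real numbers λ and μ, the sequence p ↦ (λ^{2p+1} + μ^{2p+1})^{1/(2p+1)} (real odd root) converges as p → ∞, and its limit equals λ if |λ| > |μ|, equals μ if |λ| < |μ|, and equals (λ+μ)/2 if |λ| = |μ|. -/
open Filter Finset

/-- The binary idempotent operation `⊞`. -/
noncomputable def bop (a b : ℝ) : ℝ :=
  if |b| < |a| then a else if |a| < |b| then b else (a + b) / 2

/-- The unique real `(2p+1)`-th root of `t`. -/
noncomputable def oddRoot (p : ℕ) (t : ℝ) : ℝ :=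
  Real.sign t * |t| ^ ((1 : ℝ) / (2 * (p : ℝ) + 1))

/-- `ξ_I[u](α) = Card{i ∈ I : u i = α} − Card{i ∈ I : u i = −α}`. -/
noncomputable def xiMap {ι : Type*} (I : Finset ι) (u : ι → ℝ) (α : ℝ) : ℤ :=
  ((I.filter fun i => u i = α).card : ℤ) - ((I.filter fun i => u i = -α).card : ℤ)

/-- The residual index set `J_I(u)`. -/
noncomputable def resid {ι : Type*} (I : Finset ι) (u : ι → ℝ) : Finset ι :=
  I.filter fun i => xiMap I u (u i) ≠ 0

/-- The `n`-ary extension `⊞_{i ∈ I} u i` of the binary operation `⊞`. -/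
noncomputable def Fop {ι : Type*} (I : Finset ι) (u : ι → ℝ) : ℝ :=
  if h : (resid I u).Nonempty then
    if 0 < xiMap I u ((resid I u).sup' h fun i => |u i|) then (resid I u).sup' h u
    else if xiMap I u ((resid I u).sup' h fun i => |u i|) < 0 then (resid I u).inf' h u
    else 0
  else 0

/-- The Chebyshev norm `max_{i ∈ [n]} |x i|`. -/
noncomputable def chebNorm {n : ℕ} (x : Fin n → ℝ) : ℝ := ⨆ i, |x i|

/-- The ultrametric distance `d_⊞(x,y) = max_i |x_i ⊟ y_i|`. -/
noncomputable def dB {n : ℕ} (x y : Fin n → ℝ) : ℝ := ⨆ i, |bop (x i) (-(y i))|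

lemma exps_tendsto : Tendsto (fun p : ℕ => (1:ℝ)/(2*(p:ℝ)+1)) atTop (nhds 0) := by
  simp only [one_div]
  apply Tendsto.inv_tendsto_atTop
  apply Filter.tendsto_atTop_add_const_right
  exact Tendsto.const_mul_atTop (by norm_num) tendsto_natCast_atTop_atTop

lemma root1 {a : ℝ} (ha : 0 < a) :
    Tendsto (fun p : ℕ => a ^ ((1:ℝ)/(2*(p:ℝ)+1))) atTop (nhds 1) := by
  have := (tendsto_const_nhds (x := a) (f := (atTop : Filter ℕ))).rpow exps_tendsto (Or.inl ha.ne')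
  simpa using this

lemma key_rpow (p : ℕ) {x L : ℝ} (hx : 0 ≤ x) (hL : 0 ≤ L) :
    (x * L ^ (2*p+1)) ^ ((1:ℝ)/(2*(p:ℝ)+1)) = x ^ ((1:ℝ)/(2*(p:ℝ)+1)) * L := by
  have hne : (2*(p:ℝ)+1) ≠ 0 := by positivity
  rw [Real.mul_rpow hx (by positivity), ← Real.rpow_natCast L (2*p+1),
    ← Real.rpow_mul hL]
  push_cast
  rw [mul_one_div_cancel hne, Real.rpow_one]

lemma real_sign_mul_abs (x : ℝ) : Real.sign x * |x| = x := by
  rcases lt_trichotomy x 0 with h | h | h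
  · rw [Real.sign_of_neg h, abs_of_neg h]; ring
  · simp [h]
  · rw [Real.sign_of_pos h, abs_of_pos h, one_mul]

lemma rootSqueeze {l : ℝ} (hl : l ≠ 0) {t : ℕ → ℝ} {a b : ℝ} (ha : 0 < a)
    (hlow : ∀ p : ℕ, a * |l| ^ (2*p+1) ≤ |t p|)
    (hup : ∀ p : ℕ, |t p| ≤ b * |l| ^ (2*p+1))
    (hsign : ∀ p : ℕ, Real.sign (t p) = Real.sign l) :
    Tendsto (fun p : ℕ => oddRoot p (t p)) atTop (nhds l) := by
  have hl0 : 0 < |l| := abs_pos.2 hl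
  have hb : 0 < b := by
    have h1 := (hlow 0).trans (hup 0)
    have h2 : (0:ℝ) < |l| ^ (2*0+1) := by positivity
    nlinarith
  have habs : Tendsto (fun p : ℕ => |t p| ^ ((1:ℝ)/(2*(p:ℝ)+1))) atTop (nhds |l|) := by
    have hlo : Tendsto (fun p : ℕ => a ^ ((1:ℝ)/(2*(p:ℝ)+1)) * |l|) atTop (nhds |l|) := by
      have := (root1 ha).mul_const |l|
      simpa using this
    have hhi : Tendsto (fun p : ℕ => b ^ ((1:ℝ)/(2*(p:ℝ)+1)) * |l|) atTop (nhds |l|) := by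
      have := (root1 hb).mul_const |l|
      simpa using this
    refine tendsto_of_tendsto_of_tendsto_of_le_of_le hlo hhi (fun p => ?_) (fun p => ?_)
    · rw [← key_rpow p ha.le (abs_nonneg l)]
      exact Real.rpow_le_rpow (by positivity) (hlow p) (by positivity)
    · rw [← key_rpow p hb.le (abs_nonneg l)]
      exact Real.rpow_le_rpow (abs_nonneg _) (hup p) (by positivity)
  have := habs.const_mul (Real.sign l)
  rw [real_sign_mul_abs] at this
  refine this.congr fun p => ?_
  simp [oddRoot, hsign p]

lemma mainA {l m : ℝ} (h : |m| < |l|) :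
    Tendsto (fun p : ℕ => oddRoot p (l ^ (2*p+1) + m ^ (2*p+1))) atTop (nhds l) := by
  have hl0 : 0 < |l| := (abs_nonneg m).trans_lt h
  have hl : l ≠ 0 := by simpa using hl0.ne'
  set c := |m| / |l| with hc
  have hc0 : 0 ≤ c := div_nonneg (abs_nonneg m) hl0.le
  have hc1 : c < 1 := (div_lt_one hl0).2 h
  have hml : |m| = c * |l| := (div_mul_cancel₀ _ hl0.ne').symm
  refine rootSqueeze hl (a := 1 - c) (b := 2) (by linarith) (fun p => ?_) (fun p => ?_)
    (fun p => ?_)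
  · -- lower bound
    have hcn : c ^ (2*p+1) ≤ c := pow_le_of_le_one hc0 hc1.le (by omega)
    have h1 : |m| ^ (2*p+1) ≤ c * |l| ^ (2*p+1) := by
      rw [hml, mul_pow]
      exact mul_le_mul_of_nonneg_right hcn (by positivity)
    have h2 : |l| ^ (2*p+1) - |m| ^ (2*p+1) ≤ |l ^ (2*p+1) + m ^ (2*p+1)| := by
      simpa [abs_pow] using abs_sub_abs_le_abs_sub (l ^ (2*p+1)) (-(m ^ (2*p+1)))
    nlinarith
  · -- upper bound
    have h1 : |m| ^ (2*p+1) ≤ |l| ^ (2*p+1) := pow_le_pow_left₀ (abs_nonneg m) h.le _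
    have h2 := abs_add_le (l ^ (2*p+1)) (m ^ (2*p+1))
    rw [abs_pow, abs_pow] at h2
    nlinarith
  · -- sign
    have hodd : Odd (2*p+1) := odd_two_mul_add_one p
    have hmn : |m| ^ (2*p+1) < |l| ^ (2*p+1) := pow_lt_pow_left₀ h (abs_nonneg m) (by omega)
    have hm1 : m ^ (2*p+1) ≤ |m| ^ (2*p+1) := by
      rw [← abs_pow]; exact le_abs_self _
    have hm2 : -(|m| ^ (2*p+1)) ≤ m ^ (2*p+1) := by
      rw [← abs_pow]; exact neg_abs_le _
    rcases hl.lt_or_gt with hl' | hl'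
    · have hln : l ^ (2*p+1) = -(|l| ^ (2*p+1)) := by
        rw [abs_of_neg hl', Odd.neg_pow hodd, neg_neg]
      have : l ^ (2*p+1) + m ^ (2*p+1) < 0 := by linarith
      rw [Real.sign_of_neg this, Real.sign_of_neg hl']
    · have hln : l ^ (2*p+1) = |l| ^ (2*p+1) := by rw [abs_of_pos hl']
      have : 0 < l ^ (2*p+1) + m ^ (2*p+1) := by linarith
      rw [Real.sign_of_pos this, Real.sign_of_pos hl']

/-- the sequence `p ↦ (λ^{2p+1} + μ^{2p+1})^{1/(2p+1)}` converges to `λ ⊞ μ`. -/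
theorem stmt0 (l m : ℝ) :
    Filter.Tendsto (fun p : ℕ => oddRoot p (l ^ (2 * p + 1) + m ^ (2 * p + 1)))
      Filter.atTop (nhds (bop l m)) := by
  rcases lt_trichotomy |m| |l| with h | h | h
  · rw [bop, if_pos h]
    exact mainA h
  · -- |m| = |l|
    rw [bop, if_neg (by rw [h]; exact lt_irrefl _), if_neg (by rw [h]; exact lt_irrefl _)]
    obtain hm | hm := abs_eq_abs.1 h
    · -- m = l
      rw [hm]
      rcases eq_or_ne l 0 with rfl | hl
      · simp [oddRoot]
      · have heq : (l + l) / 2 = l := by ring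
        rw [heq]
        refine rootSqueeze hl (a := 2) (b := 2) (t := fun p => l ^ (2*p+1) + l ^ (2*p+1))
          two_pos (fun p => ?_) (fun p => ?_) (fun p => ?_) <;> beta_reduce
        · have : l ^ (2*p+1) + l ^ (2*p+1) = 2 * l ^ (2*p+1) := by ring
          rw [this, abs_mul, abs_pow]
          simp [abs_of_pos, le_refl]
        · have : l ^ (2*p+1) + l ^ (2*p+1) = 2 * l ^ (2*p+1) := by ring
          rw [this, abs_mul, abs_pow]
          simp
        · have hodd : Odd (2*p+1) := odd_two_mul_add_one p
          rcases hl.lt_or_gt with hl' | hl'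
          · have h1 : l ^ (2*p+1) < 0 := hodd.pow_neg hl'
            rw [Real.sign_of_neg (by linarith), Real.sign_of_neg hl']
          · have h1 : 0 < l ^ (2*p+1) := pow_pos hl' _
            rw [Real.sign_of_pos (by linarith), Real.sign_of_pos hl']
    · -- m = -l
      subst hm
      have hz : ∀ p : ℕ, l ^ (2*p+1) + (-l) ^ (2*p+1) = 0 := by
        intro p
        rw [(odd_two_mul_add_one p).neg_pow]
        ring
      have : (l + -l) / 2 = 0 := by ring
      rw [this]
      refine (tendsto_const_nhds (x := (0:ℝ)) (f := (atTop : Filter ℕ))).congr fun p => ?_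
      rw [hz p]
      simp [oddRoot]
  · rw [bop, if_neg (lt_asymm h), if_pos h]
    have := mainA (l := m) (m := l) h
    refine this.congr fun p => ?_
    rw [add_comm]
end

section
/- For every n ≥ 1 and every x = (x₁,…,xₙ) ∈ ℝⁿ, the sequence p ↦ (Σ_{i∈[n]} x_i^{2p+1})^{1/(2p+1)} (real odd root) converges as p → ∞ to the n-ary value ⊞_{i∈[n]} x_i defined via residual index sets. -/
open Filter Finset

lemma xiMap_neg {ι : Type*} (I : Finset ι) (u : ι → ℝ) (α : ℝ) :
    xiMap I u (-α) = - xiMap I u α := by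
  simp only [xiMap, neg_neg]
  ring

lemma card_eq_of_xi_zero {ι : Type*} (I : Finset ι) (u : ι → ℝ) {α : ℝ}
    (h : xiMap I u α = 0) :
    (I.filter fun i => u i = α).card = (I.filter fun i => u i = -α).card := by
  have := sub_eq_zero.mp h
  exact_mod_cast this

lemma cancel_sum {ι : Type*} (I : Finset ι) (u : ι → ℝ) (p : ℕ) :
    ∑ i ∈ I.filter (fun i => xiMap I u (u i) = 0), u i ^ (2*p+1) = 0 := by
  classical
  set K := I.filter (fun i => xiMap I u (u i) = 0) with hK
  have hKI : ∀ i ∈ K, i ∈ I ∧ xiMap I u (u i) = 0 := fun i hi => Finset.mem_filter.mp hi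
  have hfiber : ∀ b : ℝ, xiMap I u b = 0 →
      K.filter (fun i => u i = b) = I.filter (fun i => u i = b) := by
    intro b hb
    ext i
    simp only [hK, Finset.filter_filter, Finset.mem_filter]
    constructor
    · rintro ⟨hi, _, h⟩; exact ⟨hi, h⟩
    · rintro ⟨hi, h⟩; exact ⟨hi, by rw [h]; exact hb, h⟩
  have key : ∑ i ∈ K, u i ^ (2*p+1)
      = ∑ b ∈ K.image u, ((K.filter fun i => u i = b).card) • b ^ (2*p+1) :=
    Finset.sum_comp (fun b : ℝ => b ^ (2*p+1)) u
  rw [key]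
  have hodd : Odd (2*p+1) := ⟨p, by ring⟩
  refine Finset.sum_involution (fun b _ => -b) ?_ ?_ ?_ ?_
  · intro b hb
    obtain ⟨i, hi, rfl⟩ := Finset.mem_image.mp hb
    have hxi : xiMap I u (u i) = 0 := (hKI i hi).2
    have h1 : (K.filter fun j => u j = u i) = I.filter fun j => u j = u i := hfiber _ hxi
    have hxin : xiMap I u (-u i) = 0 := by rw [xiMap_neg, hxi, neg_zero]
    have h2 : (K.filter fun j => u j = -u i) = I.filter fun j => u j = -u i := hfiber _ hxin
    have hc : (I.filter fun j => u j = u i).card = (I.filter fun j => u j = -u i).card :=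
      card_eq_of_xi_zero I u hxi
    rw [h1, h2, hc, hodd.neg_pow]
    simp [nsmul_eq_mul]
  · intro b hb hf h
    apply hf
    have h' : -b = b := h
    have : b = 0 := by linarith
    simp [this, pow_eq_zero_iff]
  · intro b hb
    obtain ⟨i, hi, rfl⟩ := Finset.mem_image.mp hb
    have hxi : xiMap I u (u i) = 0 := (hKI i hi).2
    have hc : (I.filter fun j => u j = u i).card = (I.filter fun j => u j = -u i).card :=
      card_eq_of_xi_zero I u hxi
    have hpos : 0 < (I.filter fun j => u j = -u i).card := by
      rw [← hc]
      exact Finset.card_pos.mpr ⟨i, Finset.mem_filter.mpr ⟨(hKI i hi).1, rfl⟩⟩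
    obtain ⟨j, hj⟩ := Finset.card_pos.mp hpos
    obtain ⟨hjI, hju⟩ := Finset.mem_filter.mp hj
    refine Finset.mem_image.mpr ⟨j, ?_, hju⟩
    refine Finset.mem_filter.mpr ⟨hjI, ?_⟩
    rw [hju, xiMap_neg, hxi, neg_zero]
  · intro b hb; simp

lemma top_sum {ι : Type*} (I : Finset ι) (u : ι → ℝ) {M : ℝ} (hM : 0 < M) (p : ℕ) :
    ∑ i ∈ I.filter (fun i => u i = M ∨ u i = -M), u i ^ (2*p+1)
      = (xiMap I u M : ℝ) * M ^ (2*p+1) := by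
  classical
  have hodd : Odd (2*p+1) := ⟨p, by ring⟩
  rw [Finset.filter_or, Finset.sum_union]
  · have h1 : ∑ i ∈ I.filter (fun i => u i = M), u i ^ (2*p+1)
        = ((I.filter fun i => u i = M).card : ℝ) * M ^ (2*p+1) := by
      rw [Finset.sum_congr rfl (fun i hi => by rw [(Finset.mem_filter.mp hi).2]),
        Finset.sum_const, nsmul_eq_mul]
    have h2 : ∑ i ∈ I.filter (fun i => u i = -M), u i ^ (2*p+1)
        = -(((I.filter fun i => u i = -M).card : ℝ) * M ^ (2*p+1)) := by
      rw [Finset.sum_congr rfl (fun i hi => by rw [(Finset.mem_filter.mp hi).2]),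
        Finset.sum_const, nsmul_eq_mul, hodd.neg_pow]
      ring
    rw [h1, h2, xiMap]
    push_cast
    ring
  · rw [Finset.disjoint_left]
    rintro i hi1 hi2
    have e1 := (Finset.mem_filter.mp hi1).2
    have e2 := (Finset.mem_filter.mp hi2).2
    rw [e1] at e2
    linarith

lemma aux {ι : Type*} (I : Finset ι) (u : ι → ℝ) :
    Filter.Tendsto (fun p : ℕ => oddRoot p (∑ i ∈ I, u i ^ (2 * p + 1)))
      Filter.atTop (nhds (Fop I u)) := by
  classical
  by_cases h : (resid I u).Nonempty
  swap
  · have hresid : resid I u = ∅ := Finset.not_nonempty_iff_eq_empty.mp h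
    have hK : I.filter (fun i => xiMap I u (u i) = 0) = I := by
      ext i
      simp only [Finset.mem_filter, and_iff_left_iff_imp]
      intro hi
      by_contra hne
      have hmem : i ∈ resid I u := Finset.mem_filter.mpr ⟨hi, hne⟩
      simp [hresid] at hmem
    have hS : ∀ p : ℕ, ∑ i ∈ I, u i ^ (2 * p + 1) = 0 := by
      intro p
      have hc := cancel_sum I u p
      rwa [hK] at hc
    have hF : Fop I u = 0 := by unfold Fop; rw [dif_neg h]
    rw [hF]
    have heq : (fun p : ℕ => oddRoot p (∑ i ∈ I, u i ^ (2 * p + 1))) = fun _ => (0:ℝ) := by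
      funext p
      rw [hS p]
      simp [oddRoot]
    rw [heq]
    exact tendsto_const_nhds
  · obtain ⟨i0, hi0, hMi0⟩ := Finset.exists_mem_eq_sup' h (fun i => |u i|)
    set M := (resid I u).sup' h (fun i => |u i|) with hMdef
    have hune : u i0 ≠ 0 := by
      intro h0
      have hxi := (Finset.mem_filter.mp hi0).2
      apply hxi
      rw [h0]
      simp [xiMap]
    have hM0 : 0 < M := hMi0 ▸ abs_pos.mpr hune
    have habs : ∀ i ∈ resid I u, |u i| ≤ M := by
      intro i hi
      rw [hMdef]
      exact Finset.le_sup' (fun j => |u j|) hi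
    have hεne : xiMap I u M ≠ 0 := by
      have h1 : xiMap I u (u i0) ≠ 0 := (Finset.mem_filter.mp hi0).2
      rcases (abs_eq hM0.le).mp hMi0.symm with hc | hc
      · rwa [hc] at h1
      · intro h0; apply h1; rw [hc, xiMap_neg, h0, neg_zero]
    set ε := xiMap I u M with hεdef
    set s : ℝ := if 0 < ε then 1 else -1 with hsdef
    have hscases : s = 1 ∨ s = -1 := by
      rw [hsdef]; split <;> simp
    have hsabs : |s| = 1 := by rcases hscases with h' | h' <;> simp [h']
    have hεbound : |ε| ≤ (I.card : ℤ) := by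
      have hA := Finset.card_filter_le I (fun i => u i = M)
      have hB := Finset.card_filter_le I (fun i => u i = -M)
      rw [hεdef, xiMap, abs_le]
      constructor <;> [skip; skip] <;> omega
    have hεR : |(ε:ℝ)| ≤ (I.card : ℝ) := by exact_mod_cast hεbound
    have hsε : (1:ℝ) ≤ s * ε := by
      rw [hsdef]
      by_cases hp : 0 < ε
      · rw [if_pos hp, one_mul]
        exact_mod_cast hp
      · rw [if_neg hp]
        have h1 : ε ≤ -1 := by omega
        have h2 : (ε:ℝ) ≤ -1 := by exact_mod_cast h1
        linarith
    have hsεup : s * (ε:ℝ) ≤ (I.card : ℝ) := by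
      calc s * (ε:ℝ) ≤ |s * (ε:ℝ)| := le_abs_self _
        _ = |(ε:ℝ)| := by rw [abs_mul, hsabs, one_mul]
        _ ≤ _ := hεR
    -- Fop value
    have hsup : 0 < ε → (resid I u).sup' h u = M := by
      intro hpos
      have hcc : 0 < (I.filter fun i => u i = M).card := by
        have h' : 0 < xiMap I u M := by rw [← hεdef]; exact hpos
        rw [xiMap] at h'
        omega
      obtain ⟨j, hj⟩ := Finset.card_pos.mp hcc
      obtain ⟨hjI, hjx⟩ := Finset.mem_filter.mp hj
      have hjJ : j ∈ resid I u := Finset.mem_filter.mpr ⟨hjI, by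
        rw [hjx, ← hεdef]; exact hεne⟩
      apply le_antisymm
      · exact Finset.sup'_le h u (fun i hi => (abs_le.mp (habs i hi)).2)
      · calc M = u j := hjx.symm
          _ ≤ _ := Finset.le_sup' u hjJ
    have hinf : ε < 0 → (resid I u).inf' h u = -M := by
      intro hneg
      have hcc : 0 < (I.filter fun i => u i = -M).card := by
        have h' : xiMap I u M < 0 := by rw [← hεdef]; exact hneg
        rw [xiMap] at h'
        omega
      obtain ⟨j, hj⟩ := Finset.card_pos.mp hcc
      obtain ⟨hjI, hjx⟩ := Finset.mem_filter.mp hj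
      have hjJ : j ∈ resid I u := Finset.mem_filter.mpr ⟨hjI, by
        rw [hjx, xiMap_neg, ← hεdef]
        simpa using hεne⟩
      apply le_antisymm
      · calc (resid I u).inf' h u ≤ u j := Finset.inf'_le u hjJ
          _ = -M := hjx
      · exact Finset.le_inf' h u (fun i hi => (abs_le.mp (habs i hi)).1)
    have hFop : Fop I u = s * M := by
      unfold Fop
      rw [dif_pos h, ← hMdef, ← hεdef]
      by_cases hpos : 0 < ε
      · rw [if_pos hpos, hsup hpos, hsdef, if_pos hpos, one_mul]
      · have hneg : ε < 0 := lt_of_le_of_ne (not_lt.mp hpos) hεne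
        rw [if_neg hpos, if_pos hneg, hinf hneg, hsdef, if_neg hpos]
        ring
    -- the sum identity
    set A := (resid I u).filter (fun i => ¬(u i = M ∨ u i = -M)) with hAdef
    have hsum : ∀ p : ℕ, ∑ i ∈ I, u i ^ (2 * p + 1)
        = (ε:ℝ) * M ^ (2 * p + 1) + ∑ i ∈ A, u i ^ (2 * p + 1) := by
      intro p
      have hsplit1 := Finset.sum_filter_add_sum_filter_not I
        (fun i => xiMap I u (u i) = 0) (fun i => u i ^ (2 * p + 1))
      have hres : I.filter (fun i => ¬ xiMap I u (u i) = 0) = resid I u := by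
        ext i; simp [resid]
      rw [cancel_sum, zero_add, hres] at hsplit1
      rw [← hsplit1]
      have hsplit2 := Finset.sum_filter_add_sum_filter_not (resid I u)
        (fun i => u i = M ∨ u i = -M) (fun i => u i ^ (2 * p + 1))
      rw [← hsplit2, ← hAdef]
      congr 1
      have hfe : (resid I u).filter (fun i => u i = M ∨ u i = -M)
          = I.filter (fun i => u i = M ∨ u i = -M) := by
        ext i
        simp only [resid, Finset.filter_filter, Finset.mem_filter]
        constructor
        · rintro ⟨hi, _, hP⟩; exact ⟨hi, hP⟩
        · rintro ⟨hi, hP⟩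
          refine ⟨hi, ?_, hP⟩
          rcases hP with hP | hP
          · rw [hP, ← hεdef]; exact hεne
          · rw [hP, xiMap_neg, ← hεdef]; simpa using hεne
      rw [hfe, top_sum I u hM0, hεdef]
    -- bound on the remainder
    have hmex : ∃ m : ℝ, 0 ≤ m ∧ m < M ∧ ∀ i ∈ A, |u i| ≤ m := by
      by_cases hA : A.Nonempty
      · refine ⟨A.sup' hA (fun i => |u i|), ?_, ?_, ?_⟩
        · obtain ⟨j, hj⟩ := hA
          exact le_trans (abs_nonneg (u j)) (Finset.le_sup' (fun j => |u j|) hj)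
        · rw [Finset.sup'_lt_iff hA]
          intro i hi
          obtain ⟨hiJ, hiP⟩ := Finset.mem_filter.mp hi
          refine lt_of_le_of_ne (habs i hiJ) ?_
          intro habsM
          exact hiP ((abs_eq hM0.le).mp habsM)
        · intro i hi; exact Finset.le_sup' (fun j => |u j|) hi
      · exact ⟨0, le_refl 0, hM0, fun i hi => absurd ⟨i, hi⟩ hA⟩
    obtain ⟨m, hm0, hmM, hmb⟩ := hmex
    have hRbound : ∀ p : ℕ, |∑ i ∈ A, u i ^ (2 * p + 1)| ≤ (I.card : ℝ) * m ^ (2 * p + 1) := by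
      intro p
      have hsub : A ⊆ I := le_trans (Finset.filter_subset _ _) (Finset.filter_subset _ _)
      calc |∑ i ∈ A, u i ^ (2 * p + 1)| ≤ ∑ i ∈ A, |u i ^ (2 * p + 1)| :=
            Finset.abs_sum_le_sum_abs _ _
        _ = ∑ i ∈ A, |u i| ^ (2 * p + 1) := by simp only [abs_pow]
        _ ≤ ∑ i ∈ A, m ^ (2 * p + 1) :=
            Finset.sum_le_sum (fun i hi => pow_le_pow_left₀ (abs_nonneg _) (hmb i hi) _)
        _ = (A.card : ℝ) * m ^ (2 * p + 1) := by rw [Finset.sum_const, nsmul_eq_mul]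
        _ ≤ (I.card : ℝ) * m ^ (2 * p + 1) := by
            apply mul_le_mul_of_nonneg_right _ (pow_nonneg hm0 _)
            exact_mod_cast Finset.card_le_card hsub
    -- eventual smallness of remainder
    have h2p : Tendsto (fun p : ℕ => 2 * p + 1) atTop atTop :=
      tendsto_atTop_atTop.mpr (fun b => ⟨b, fun a ha => by omega⟩)
    have hq : Tendsto (fun k : ℕ => (I.card : ℝ) * (m / M) ^ k) atTop (nhds 0) := by
      have h0 : Tendsto (fun k : ℕ => (m / M) ^ k) atTop (nhds 0) :=
        tendsto_pow_atTop_nhds_zero_of_lt_one (div_nonneg hm0 hM0.le) ((div_lt_one hM0).mpr hmM)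
      simpa using h0.const_mul (I.card : ℝ)
    have hq2 : Tendsto (fun p : ℕ => (I.card : ℝ) * (m / M) ^ (2 * p + 1)) atTop (nhds 0) :=
      hq.comp h2p
    have hev : ∀ᶠ p : ℕ in atTop,
        (I.card : ℝ) * m ^ (2 * p + 1) ≤ (1/2) * M ^ (2 * p + 1) := by
      filter_upwards [hq2.eventually (gt_mem_nhds (by norm_num : (0:ℝ) < 1/2))] with p hp
      have hMk : (0:ℝ) < M ^ (2 * p + 1) := pow_pos hM0 _
      rw [div_pow, ← mul_div_assoc] at hp
      have := (div_lt_iff₀ hMk).mp hp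
      linarith
    -- main eventual bounds
    have hE : ∀ᶠ p : ℕ in atTop,
        (1/2) * M ^ (2 * p + 1) ≤ s * (∑ i ∈ I, u i ^ (2 * p + 1))
        ∧ s * (∑ i ∈ I, u i ^ (2 * p + 1)) ≤ ((I.card : ℝ) + 1) * M ^ (2 * p + 1) := by
      filter_upwards [hev] with p hp
      have hMk : (0:ℝ) < M ^ (2 * p + 1) := pow_pos hM0 _
      have hR := hRbound p
      have hRb : |∑ i ∈ A, u i ^ (2 * p + 1)| ≤ (1/2) * M ^ (2 * p + 1) := le_trans hR hp
      have hsum' := hsum p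
      have habsR1 : s * (∑ i ∈ A, u i ^ (2 * p + 1)) ≤ |∑ i ∈ A, u i ^ (2 * p + 1)| := by
        calc s * (∑ i ∈ A, u i ^ (2 * p + 1)) ≤ |s * (∑ i ∈ A, u i ^ (2 * p + 1))| :=
              le_abs_self _
          _ = |∑ i ∈ A, u i ^ (2 * p + 1)| := by rw [abs_mul, hsabs, one_mul]
      have habsR2 : -|∑ i ∈ A, u i ^ (2 * p + 1)| ≤ s * (∑ i ∈ A, u i ^ (2 * p + 1)) := by
        have h' : |s * (∑ i ∈ A, u i ^ (2 * p + 1))| = |∑ i ∈ A, u i ^ (2 * p + 1)| := by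
          rw [abs_mul, hsabs, one_mul]
        linarith [neg_abs_le (s * (∑ i ∈ A, u i ^ (2 * p + 1)))]
      constructor
      · rw [hsum', mul_add]
        have h1 : M ^ (2 * p + 1) ≤ s * ((ε:ℝ) * M ^ (2 * p + 1)) := by
          rw [← mul_assoc]
          nlinarith
        linarith
      · rw [hsum', mul_add, ← mul_assoc]
        have h1 : s * (ε:ℝ) * M ^ (2 * p + 1) ≤ (I.card : ℝ) * M ^ (2 * p + 1) :=
          mul_le_mul_of_nonneg_right hsεup hMk.le
        linarith
    -- limits
    have he0 : Tendsto (fun p : ℕ => (1:ℝ) / (2 * (p:ℝ) + 1)) atTop (nhds 0) := by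
      have h1 : Tendsto (fun p : ℕ => 2 * (p:ℝ) + 1) atTop atTop := by
        apply tendsto_atTop_add_const_right
        exact tendsto_natCast_atTop_atTop.const_mul_atTop (by norm_num : (0:ℝ) < 2)
      have h2 := h1.inv_tendsto_atTop
      simp only [one_div]
      exact h2
    have hroot : ∀ c : ℝ, 0 < c →
        Tendsto (fun p : ℕ => c ^ ((1:ℝ) / (2 * (p:ℝ) + 1))) atTop (nhds 1) := by
      intro c hc
      have := (tendsto_const_nhds : Tendsto (fun _ : ℕ => c) atTop (nhds c)).rpow he0
        (Or.inl hc.ne')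
      simpa using this
    have hMkroot : ∀ p : ℕ, ((M ^ (2 * p + 1) : ℝ)) ^ ((1:ℝ) / (2 * (p:ℝ) + 1)) = M := by
      intro p
      rw [← Real.rpow_natCast M (2 * p + 1), ← Real.rpow_mul hM0.le]
      rw [show ((2 * p + 1 : ℕ):ℝ) * ((1:ℝ) / (2 * (p:ℝ) + 1)) = 1 by
        have hne : (2 * (p:ℝ) + 1) ≠ 0 := by positivity
        push_cast
        field_simp]
      exact Real.rpow_one M
    have hbound_root : ∀ c : ℝ, 0 < c →
        Tendsto (fun p : ℕ => (c * M ^ (2 * p + 1)) ^ ((1:ℝ) / (2 * (p:ℝ) + 1)))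
          atTop (nhds M) := by
      intro c hc
      have heq : ∀ p : ℕ, (c * M ^ (2 * p + 1)) ^ ((1:ℝ) / (2 * (p:ℝ) + 1))
          = c ^ ((1:ℝ) / (2 * (p:ℝ) + 1)) * M := by
        intro p
        rw [Real.mul_rpow hc.le (pow_nonneg hM0.le _), hMkroot p]
      simp only [heq]
      simpa using (hroot c hc).mul_const M
    have hg : Tendsto
        (fun p : ℕ => (s * (∑ i ∈ I, u i ^ (2 * p + 1))) ^ ((1:ℝ) / (2 * (p:ℝ) + 1)))
        atTop (nhds M) := by
      apply tendsto_of_tendsto_of_tendsto_of_le_of_le'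
        (hbound_root (1/2) (by norm_num)) (hbound_root ((I.card : ℝ) + 1) (by linarith [(Nat.cast_nonneg I.card : (0:ℝ) ≤ I.card)]))
      · filter_upwards [hE] with p hp
        exact Real.rpow_le_rpow
          (mul_nonneg (by norm_num) (pow_nonneg hM0.le _)) hp.1 (by positivity)
      · filter_upwards [hE] with p hp
        exact Real.rpow_le_rpow
          (le_trans (mul_nonneg (by norm_num) (pow_nonneg hM0.le _)) hp.1) hp.2 (by positivity)
    rw [hFop]
    have hfinal : Tendsto
        (fun p : ℕ => s * ((s * (∑ i ∈ I, u i ^ (2 * p + 1))) ^ ((1:ℝ) / (2 * (p:ℝ) + 1))))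
        atTop (nhds (s * M)) := hg.const_mul s
    refine Filter.Tendsto.congr' ?_ hfinal
    filter_upwards [hE] with p hp
    have hSpos : 0 < s * (∑ i ∈ I, u i ^ (2 * p + 1)) :=
      lt_of_lt_of_le (mul_pos (by norm_num) (pow_pos hM0 _)) hp.1
    rw [oddRoot]
    rcases hscases with hs | hs
    · rw [hs, one_mul] at hSpos
      rw [hs, one_mul, one_mul, Real.sign_of_pos hSpos, abs_of_pos hSpos, one_mul]
    · rw [hs] at hSpos
      have hneg : (∑ i ∈ I, u i ^ (2 * p + 1)) < 0 := by nlinarith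
      rw [hs, Real.sign_of_neg hneg, abs_of_neg hneg,
        neg_one_mul (∑ i ∈ I, u i ^ (2 * p + 1))]

/-- the sequence `p ↦ (Σ_i x_i^{2p+1})^{1/(2p+1)}` converges to `⊞_{i∈[n]} x_i`. -/
theorem stmt1 (n : ℕ) (hn : 1 ≤ n) (x : Fin n → ℝ) :
    Filter.Tendsto (fun p : ℕ => oddRoot p (∑ i, x i ^ (2 * p + 1)))
      Filter.atTop (nhds (Fop Finset.univ x)) := by
  exact aux Finset.univ x
end

section
/- For every x ∈ ℝⁿ and every nonempty subset I of [n]: (1) for each i ∈ I, the value x_i ⊞ (⊞_{j∈I∖{i}} x_j) belongs to the two-element set {0, ⊞_{j∈I} x_j}; and (2) ⊞_{i∈I} x_i = ⊞_{i∈I} [ x_i ⊞ (⊞_{j∈I∖{i}} x_j) ]. -/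
open Filter Finset

set_option linter.unusedSectionVars false
set_option linter.unusedVariables false

section Aux
variable {ι : Type*} [DecidableEq ι]

lemma xi_neg (I : Finset ι) (u : ι → ℝ) (α : ℝ) : xiMap I u (-α) = - xiMap I u α := by
  unfold xiMap
  simp only [neg_neg]
  ring

lemma xi_zero (I : Finset ι) (u : ι → ℝ) : xiMap I u 0 = 0 := by
  unfold xiMap
  simp

lemma xi_negfun (I : Finset ι) (u : ι → ℝ) (α : ℝ) :
    xiMap I (fun i => -u i) α = - xiMap I u α := by
  unfold xiMap
  simp only [neg_eq_iff_eq_neg, neg_neg]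
  ring

lemma exists_of_xi_pos {I : Finset ι} {u : ι → ℝ} {α : ℝ} (h : 0 < xiMap I u α) :
    ∃ j ∈ I, u j = α := by
  unfold xiMap at h
  have : 0 < (I.filter fun i => u i = α).card := by omega
  obtain ⟨j, hj⟩ := Finset.card_pos.1 this
  obtain ⟨hjI, hjv⟩ := Finset.mem_filter.1 hj
  exact ⟨j, hjI, hjv⟩

lemma card_filter_erase {I : Finset ι} {i : ι} (hi : i ∈ I) (p : ι → Prop) [DecidablePred p] :
    ((((I.erase i).filter p).card : ℤ)) = ((I.filter p).card : ℤ) - (if p i then 1 else 0) := by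
  rw [Finset.filter_erase]
  by_cases h : p i
  · have hm : i ∈ I.filter p := Finset.mem_filter.2 ⟨hi, h⟩
    rw [Finset.card_erase_of_mem hm, if_pos h]
    have h1 : 1 ≤ (I.filter p).card := Finset.card_pos.2 ⟨i, hm⟩
    omega
  · rw [Finset.erase_eq_of_notMem (fun hm => h (Finset.mem_filter.1 hm).2), if_neg h]
    ring

lemma xi_erase {I : Finset ι} {x : ι → ℝ} {i : ι} (hi : i ∈ I) (α : ℝ) :
    xiMap (I.erase i) x α =
      xiMap I x α - (if x i = α then 1 else 0) + (if x i = -α then 1 else 0) := by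
  unfold xiMap
  rw [card_filter_erase hi (fun j => x j = α), card_filter_erase hi (fun j => x j = -α)]
  ring

lemma Fop_eq {I : Finset ι} {u : ι → ℝ} {v : ℝ} (hv : v ≠ 0)
    (hex : ∃ j ∈ I, u j = v) (hxi : 0 < xiMap I u v)
    (hbd : ∀ j ∈ I, xiMap I u (u j) ≠ 0 → |u j| ≤ |v|) :
    Fop I u = v := by
  obtain ⟨j, hjI, hjv⟩ := hex
  have hjr : j ∈ resid I u := Finset.mem_filter.2 ⟨hjI, by rw [hjv]; exact ne_of_gt hxi⟩
  have h : (resid I u).Nonempty := ⟨j, hjr⟩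
  have hMle : (resid I u).sup' h (fun i => |u i|) ≤ |v| := by
    apply Finset.sup'_le
    intro k hk
    obtain ⟨hkI, hkx⟩ := Finset.mem_filter.1 hk
    exact hbd k hkI hkx
  have hMge : |v| ≤ (resid I u).sup' h (fun i => |u i|) := by
    have := Finset.le_sup' (fun i => |u i|) hjr
    rwa [hjv] at this
  have hM : (resid I u).sup' h (fun i => |u i|) = |v| := le_antisymm hMle hMge
  rw [Fop, dif_pos h, hM]
  rcases lt_or_gt_of_ne hv with hneg | hpos
  · have habs : |v| = -v := abs_of_neg hneg
    have hxiM : xiMap I u |v| = - xiMap I u v := by rw [habs, xi_neg]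
    rw [if_neg (by rw [hxiM]; omega), if_pos (by rw [hxiM]; omega)]
    apply le_antisymm
    · exact (Finset.inf'_le u hjr).trans_eq hjv
    · apply Finset.le_inf'
      intro k hk
      obtain ⟨hkI, hkx⟩ := Finset.mem_filter.1 hk
      have hb : |u k| ≤ -v := (hbd k hkI hkx).trans_eq habs
      have := neg_abs_le (u k)
      linarith
  · have habs : |v| = v := abs_of_pos hpos
    have hxiM : xiMap I u |v| = xiMap I u v := by rw [habs]
    rw [if_pos (by rw [hxiM]; omega)]
    apply le_antisymm
    · apply Finset.sup'_le
      intro k hk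
      obtain ⟨hkI, hkx⟩ := Finset.mem_filter.1 hk
      have hb : |u k| ≤ v := (hbd k hkI hkx).trans_eq habs
      have := le_abs_self (u k)
      linarith
    · exact hjv.symm.trans_le (Finset.le_sup' u hjr)

lemma Fop_abs_lt {I : Finset ι} {u : ι → ℝ} {c : ℝ} (hc : 0 < c)
    (hbd : ∀ j ∈ I, xiMap I u (u j) ≠ 0 → |u j| < c) : |Fop I u| < c := by
  rw [Fop]
  split_ifs with h h1 h2
  · obtain ⟨j, hj, hje⟩ := Finset.exists_mem_eq_sup' h u
    rw [hje]
    obtain ⟨hjI, hjx⟩ := Finset.mem_filter.1 hj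
    exact hbd j hjI hjx
  · obtain ⟨j, hj, hje⟩ := Finset.exists_mem_eq_inf' h u
    rw [hje]
    obtain ⟨hjI, hjx⟩ := Finset.mem_filter.1 hj
    exact hbd j hjI hjx
  · simpa using hc
  · simpa using hc

lemma resid_negfun (I : Finset ι) (u : ι → ℝ) : resid I (fun i => -u i) = resid I u := by
  unfold resid
  apply Finset.filter_congr
  intro j _
  simp only [xi_negfun, xi_neg, neg_neg, ne_eq, neg_eq_zero]

lemma negSup {s : Finset ι} (h : s.Nonempty) (u : ι → ℝ) :
    s.sup' h (fun i => -u i) = - s.inf' h u := by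
  apply le_antisymm
  · apply Finset.sup'_le
    intro k hk
    exact neg_le_neg (Finset.inf'_le u hk)
  · obtain ⟨j, hj, hje⟩ := Finset.exists_mem_eq_inf' h u
    rw [hje]
    exact Finset.le_sup' (fun i => -u i) hj

lemma negInf {s : Finset ι} (h : s.Nonempty) (u : ι → ℝ) :
    s.inf' h (fun i => -u i) = - s.sup' h u := by
  apply le_antisymm
  · obtain ⟨j, hj, hje⟩ := Finset.exists_mem_eq_sup' h u
    rw [hje]
    exact Finset.inf'_le (fun i => -u i) hj
  · apply Finset.le_inf'
    intro k hk
    exact neg_le_neg (Finset.le_sup' u hk)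

lemma Fop_negfun (I : Finset ι) (u : ι → ℝ) : Fop I (fun i => -u i) = - Fop I u := by
  unfold Fop
  rw [resid_negfun]
  by_cases h : (resid I u).Nonempty
  · rw [dif_pos h, dif_pos h]
    have habs : ((resid I u).sup' h fun i => |-u i|) = (resid I u).sup' h fun i => |u i| := by
      apply Finset.sup'_congr h rfl
      intro i _
      exact abs_neg (u i)
    rw [habs, xi_negfun]
    rcases lt_trichotomy (xiMap I u ((resid I u).sup' h fun i => |u i|)) 0 with hlt | heq | hgt
    · rw [if_pos (by omega), if_neg (by omega), if_pos hlt, negSup]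
    · rw [heq]
      simp
    · rw [if_neg (by omega), if_pos (by omega), if_pos hgt, negInf]
  · rw [dif_neg h, dif_neg h]
    ring
end Aux

section Aux2
variable {ι : Type*} [DecidableEq ι]

lemma bop_self (a : ℝ) : bop a a = a := by
  simp [bop]

lemma bop_neg_self (a : ℝ) : bop a (-a) = 0 := by
  simp [bop]

lemma bop_neg_self' (a : ℝ) : bop (-a) a = 0 := by
  simp [bop]

lemma bop_eq_left {a b : ℝ} (h : |b| < |a|) : bop a b = a := if_pos h

lemma bop_eq_right {a b : ℝ} (h : |a| < |b|) : bop a b = b := by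
  rw [bop, if_neg (not_lt.2 h.le), if_pos h]

lemma bop_negfun (a b : ℝ) : bop (-a) (-b) = - bop a b := by
  simp only [bop, abs_neg]
  split_ifs <;> ring

lemma bd_erase {I : Finset ι} {x : ι → ℝ} {i : ι} {M c : ℝ} (hi : i ∈ I)
    (hbound : ∀ j ∈ I, xiMap I x (x j) ≠ 0 → |x j| ≤ M)
    (hle : |x i| ≤ c) (hMc : M ≤ c) :
    ∀ j ∈ I.erase i, xiMap (I.erase i) x (x j) ≠ 0 → |x j| ≤ c := by
  intro j hj hne
  have hjI := Finset.mem_of_mem_erase hj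
  by_cases h1 : x j = x i
  · rw [h1]; exact hle
  by_cases h2 : x j = -x i
  · rw [h2, abs_neg]; exact hle
  refine le_trans (hbound j hjI ?_) hMc
  rw [xi_erase hi, if_neg (fun hh => h1 hh.symm),
      if_neg (fun hh => h2 (neg_eq_iff_eq_neg.1 hh.symm))] at hne
  simpa using hne

lemma Fop_erase_neg {I : Finset ι} {x : ι → ℝ} {i : ι} (hi : i ∈ I)
    (h0 : xiMap I x (x i) = 0) (hne : x i ≠ 0)
    (hbd : ∀ j ∈ I, xiMap I x (x j) ≠ 0 → |x j| ≤ |x i|) :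
    Fop (I.erase i) x = -(x i) := by
  have hii : x i ≠ -(x i) := fun hh => hne (by linarith [hh])
  apply Fop_eq (neg_ne_zero.2 hne)
  · have hcc : (I.filter fun j => x j = x i).card = (I.filter fun j => x j = -(x i)).card := by
      unfold xiMap at h0
      omega
    have hc : 0 < (I.filter fun j => x j = -(x i)).card := by
      rw [← hcc]
      exact Finset.card_pos.2 ⟨i, Finset.mem_filter.2 ⟨hi, rfl⟩⟩
    obtain ⟨j, hj⟩ := Finset.card_pos.1 hc
    obtain ⟨hjI, hjv⟩ := Finset.mem_filter.1 hj
    refine ⟨j, Finset.mem_erase.2 ⟨fun hji => ?_, hjI⟩, hjv⟩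
    rw [hji] at hjv
    exact hii hjv
  · rw [xi_erase hi, xi_neg, h0, if_neg hii, if_pos (neg_neg (x i)).symm]
    norm_num
  · intro j hj hnej
    rw [abs_neg]
    have hjI := Finset.mem_of_mem_erase hj
    by_cases h1 : x j = x i
    · rw [h1]
    by_cases h2 : x j = -(x i)
    · rw [h2, abs_neg]
    apply hbd j hjI
    rw [xi_erase hi, if_neg (fun hh => h1 hh.symm),
        if_neg (fun hh => h2 (neg_eq_iff_eq_neg.1 hh.symm))] at hnej
    simpa using hnej

end Aux2

section Main
variable {ι : Type*} [DecidableEq ι]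

lemma bop_erase_eq_M {I : Finset ι} {x : ι → ℝ} {M : ℝ} {i : ι} (hi : i ∈ I)
    (hM : 0 < M) (hxiM : 0 < xiMap I x M)
    (hbound : ∀ j ∈ I, xiMap I x (x j) ≠ 0 → |x j| ≤ M)
    (hx : x i = M ∨ |x i| < M) :
    bop (x i) (Fop (I.erase i) x) = M := by
  have hMM : |M| = M := abs_of_pos hM
  have hMnM : M ≠ -M := fun hh => by linarith [hh]
  rcases hx with hx | hx
  · -- x i = M
    by_cases hk : 1 < xiMap I x M
    · have hF : Fop (I.erase i) x = M := by
        apply Fop_eq (ne_of_gt hM)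
        · have h2 : 2 ≤ (I.filter fun j => x j = M).card := by
            unfold xiMap at hk
            omega
          have hpc : 0 < ((I.filter fun j => x j = M).erase i).card := by
            have := Finset.pred_card_le_card_erase (s := I.filter fun j => x j = M) (a := i)
            omega
          obtain ⟨j, hj⟩ := Finset.card_pos.1 hpc
          obtain ⟨hjne, hjf⟩ := Finset.mem_erase.1 hj
          obtain ⟨hjI, hjv⟩ := Finset.mem_filter.1 hjf
          exact ⟨j, Finset.mem_erase.2 ⟨hjne, hjI⟩, hjv⟩
        · rw [xi_erase hi, if_pos hx, if_neg (by rw [hx]; exact hMnM)]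
          omega
        · intro j hj hne
          rw [hMM]
          exact bd_erase hi hbound (le_of_eq (by rw [hx, hMM])) le_rfl j hj hne
      rw [hF, hx]
      exact bop_self M
    · have hk1 : xiMap I x M = 1 := by omega
      have hs : |Fop (I.erase i) x| < M := by
        apply Fop_abs_lt hM
        intro j hj hne
        have hjI := Finset.mem_of_mem_erase hj
        by_cases h1 : x j = M
        · exfalso
          rw [h1, xi_erase hi, if_pos hx, if_neg (by rw [hx]; exact hMnM)] at hne
          omega
        · by_cases h2 : x j = -M
          · exfalso
            have hxin : xiMap I x (-M) = -1 := by rw [xi_neg]; omega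
            rw [h2, xi_erase hi, if_neg (by rw [hx]; exact hMnM),
                if_pos (by rw [hx, neg_neg])] at hne
            omega
          · have hle : |x j| ≤ M := by
              apply hbound j hjI
              rw [xi_erase hi, if_neg (by rw [hx]; exact fun hh => h1 hh.symm),
                  if_neg (by rw [hx]; exact fun hh => h2 (neg_eq_iff_eq_neg.1 hh.symm))] at hne
              simpa using hne
            rcases lt_or_eq_of_le hle with hlt | heq
            · exact hlt
            · exfalso
              rcases (abs_eq hM.le).1 heq with hh | hh
              · exact h1 hh
              · exact h2 hh
      have : |Fop (I.erase i) x| < |x i| := by rwa [hx, hMM]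
      rw [bop_eq_left this, hx]
  · -- |x i| < M
    have hxM : x i ≠ M := fun hh => by rw [hh, hMM] at hx; linarith
    have hxnM : x i ≠ -M := fun hh => by rw [hh, abs_neg, hMM] at hx; linarith
    have hF : Fop (I.erase i) x = M := by
      apply Fop_eq (ne_of_gt hM)
      · obtain ⟨j, hjI, hjv⟩ := exists_of_xi_pos hxiM
        exact ⟨j, Finset.mem_erase.2 ⟨fun hji => hxM (hji ▸ hjv), hjI⟩, hjv⟩
      · rw [xi_erase hi, if_neg hxM, if_neg hxnM]
        omega
      · intro j hj hne
        rw [hMM]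
        exact bd_erase hi hbound hx.le le_rfl j hj hne
    rw [hF]
    exact bop_eq_right (by rwa [hMM])

lemma bop_erase_eq_zero {I : Finset ι} {x : ι → ℝ} {M : ℝ} {i : ι} (hi : i ∈ I)
    (hM : 0 < M) (hxiM : 0 < xiMap I x M)
    (hbound : ∀ j ∈ I, xiMap I x (x j) ≠ 0 → |x j| ≤ M)
    (hx : ¬(x i = M ∨ |x i| < M)) :
    bop (x i) (Fop (I.erase i) x) = 0 := by
  have hMM : |M| = M := abs_of_pos hM
  have hMnM : M ≠ -M := fun hh => by linarith [hh]
  push_neg at hx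
  obtain ⟨hxM, hge⟩ := hx
  rcases eq_or_lt_of_le hge with heq | hlt
  · -- |x i| = M hence x i = -M
    have hxi : x i = -M := by
      rcases (abs_eq hM.le).1 heq.symm with hh | hh
      · exact absurd hh hxM
      · exact hh
    have hF : Fop (I.erase i) x = M := by
      apply Fop_eq (ne_of_gt hM)
      · obtain ⟨j, hjI, hjv⟩ := exists_of_xi_pos hxiM
        refine ⟨j, Finset.mem_erase.2 ⟨fun hji => ?_, hjI⟩, hjv⟩
        rw [hji, hxi] at hjv
        exact hMnM hjv.symm
      · rw [xi_erase hi, if_neg (by rw [hxi]; exact fun hh => hMnM hh.symm), if_pos hxi]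
        omega
      · intro j hj hne
        rw [hMM]
        exact bd_erase hi hbound (le_of_eq (by rw [hxi, abs_neg, hMM])) le_rfl j hj hne
    rw [hF, hxi]
    exact bop_neg_self' M
  · -- M < |x i|
    have hx0 : x i ≠ 0 := by
      intro hh
      rw [hh, abs_zero] at hlt
      linarith
    have hxi0 : xiMap I x (x i) = 0 := by
      by_contra hne
      exact absurd (hbound i hi hne) (not_le.2 hlt)
    have hF := Fop_erase_neg hi hxi0 hx0 (fun j hj hne => (hbound j hj hne).trans hlt.le)
    rw [hF]
    exact bop_neg_self (x i)

end Main

section Top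
variable {ι : Type*} [DecidableEq ι]

lemma aux_pos (I : Finset ι) (x : ι → ℝ) (M : ℝ) (hM : 0 < M)
    (hxiM : 0 < xiMap I x M)
    (hbound : ∀ j ∈ I, xiMap I x (x j) ≠ 0 → |x j| ≤ M) :
    (∀ i ∈ I, bop (x i) (Fop (I.erase i) x) ∈ ({0, Fop I x} : Set ℝ)) ∧
    Fop I x = Fop I (fun i => bop (x i) (Fop (I.erase i) x)) := by
  have hMM : |M| = M := abs_of_pos hM
  have hFx : Fop I x = M :=
    Fop_eq (ne_of_gt hM) (exists_of_xi_pos hxiM) hxiM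
      (fun j hj hn => (hbound j hj hn).trans_eq hMM.symm)
  set b : ι → ℝ := fun i => bop (x i) (Fop (I.erase i) x) with hbdef
  have hbval : ∀ i ∈ I, b i = 0 ∨ b i = M := by
    intro i hi
    by_cases hx : x i = M ∨ |x i| < M
    · exact Or.inr (bop_erase_eq_M hi hM hxiM hbound hx)
    · exact Or.inl (bop_erase_eq_zero hi hM hxiM hbound hx)
  have hbM : ∃ j ∈ I, b j = M := by
    obtain ⟨j, hjI, hjv⟩ := exists_of_xi_pos hxiM
    exact ⟨j, hjI, bop_erase_eq_M hjI hM hxiM hbound (Or.inl hjv)⟩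
  constructor
  · intro i hi
    rw [hFx]
    rcases hbval i hi with h | h
    · exact Set.mem_insert_iff.2 (Or.inl h)
    · exact Set.mem_insert_iff.2 (Or.inr h)
  · rw [hFx]
    symm
    apply Fop_eq (ne_of_gt hM) hbM
    · unfold xiMap
      have hneg : I.filter (fun i => b i = -M) = ∅ := by
        apply Finset.filter_eq_empty_iff.2
        intro i hi
        rcases hbval i hi with h | h <;> rw [h] <;> intro hh <;> linarith [hh]
      rw [hneg]
      obtain ⟨j, hjI, hjv⟩ := hbM
      have hcp : 0 < (I.filter fun i => b i = M).card :=
        Finset.card_pos.2 ⟨j, Finset.mem_filter.2 ⟨hjI, hjv⟩⟩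
      simp only [Finset.card_empty]
      omega
    · intro j hj _
      rw [hMM]
      rcases hbval j hj with h | h <;> rw [h]
      · rw [abs_zero]; exact hM.le
      · rw [hMM]

lemma aux_empty (I : Finset ι) (x : ι → ℝ) (h0 : ∀ j ∈ I, xiMap I x (x j) = 0) :
    (∀ i ∈ I, bop (x i) (Fop (I.erase i) x) ∈ ({0, Fop I x} : Set ℝ)) ∧
    Fop I x = Fop I (fun i => bop (x i) (Fop (I.erase i) x)) := by
  have hre : resid I x = ∅ :=
    Finset.filter_eq_empty_iff.2 (fun j hj => not_not.2 (h0 j hj))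
  have hFx : Fop I x = 0 := by
    rw [Fop, dif_neg (by rw [hre]; exact Finset.not_nonempty_empty)]
  have hbz : ∀ i ∈ I, bop (x i) (Fop (I.erase i) x) = 0 := by
    intro i hi
    by_cases hx : x i = 0
    · have hF : Fop (I.erase i) x = 0 := by
        have hre' : resid (I.erase i) x = ∅ := by
          apply Finset.filter_eq_empty_iff.2
          intro j hj
          have hjI := Finset.mem_of_mem_erase hj
          rw [not_not, xi_erase hi]
          by_cases h1 : x j = 0
          · rw [h0 j hjI, if_pos (by rw [hx, h1]), if_pos (by rw [hx, h1, neg_zero])]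
            ring
          · rw [h0 j hjI, if_neg (by rw [hx]; exact fun hh => h1 hh.symm),
                if_neg (by rw [hx]; exact fun hh => h1 (by linarith [hh]))]
            ring
        rw [Fop, dif_neg (by rw [hre']; exact Finset.not_nonempty_empty)]
      rw [hF, hx]
      simpa using bop_self 0
    · have hF := Fop_erase_neg hi (h0 i hi) hx
        (fun j hj hne => absurd (h0 j hj) hne)
      rw [hF]
      exact bop_neg_self (x i)
  constructor
  · intro i hi
    rw [hbz i hi]
    exact Set.mem_insert 0 _
  · rw [hFx]
    symm
    rw [Fop, dif_neg]
    rw [Finset.not_nonempty_iff_eq_empty]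
    apply Finset.filter_eq_empty_iff.2
    intro j hj
    simp only [not_not]
    rw [hbz j hj]
    exact xi_zero I _

end Top

lemma xi_sup_ne {ι : Type*} [DecidableEq ι] {I : Finset ι} {x : ι → ℝ}
    (h : (resid I x).Nonempty) :
    xiMap I x ((resid I x).sup' h fun i => |x i|) ≠ 0 := by
  obtain ⟨j, hj, hje⟩ := Finset.exists_mem_eq_sup' h (fun i => |x i|)
  rw [hje]
  obtain ⟨hjI, hjx⟩ := Finset.mem_filter.1 hj
  rcases abs_choice (x j) with hc | hc
  · rw [hc]; exact hjx
  · rw [hc, xi_neg]; simpa using hjx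


/-- decomposition property of the n-ary operation. -/
theorem stmt2 (n : ℕ) (x : Fin n → ℝ) (I : Finset (Fin n)) (hI : I.Nonempty) :
    (∀ i ∈ I, bop (x i) (Fop (I.erase i) x) ∈ ({0, Fop I x} : Set ℝ)) ∧
    Fop I x = Fop I (fun i => bop (x i) (Fop (I.erase i) x)) := by
  by_cases hre : ∀ j ∈ I, xiMap I x (x j) = 0
  · exact aux_empty I x hre
  · have h : (resid I x).Nonempty := by
      push_neg at hre
      obtain ⟨j, hjI, hj0⟩ := hre
      exact ⟨j, Finset.mem_filter.2 ⟨hjI, hj0⟩⟩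
    set M := (resid I x).sup' h fun i => |x i| with hMdef
    have hbound : ∀ j ∈ I, xiMap I x (x j) ≠ 0 → |x j| ≤ M :=
      fun j hjI hne => Finset.le_sup' (fun i => |x i|) (Finset.mem_filter.2 ⟨hjI, hne⟩)
    have hMne : xiMap I x M ≠ 0 := xi_sup_ne h
    have hM : 0 < M := by
      obtain ⟨j, hj⟩ := h
      have h0 : (0:ℝ) ≤ M :=
        le_trans (abs_nonneg (x j)) (Finset.le_sup' (fun i => |x i|) hj)
      rcases h0.lt_or_eq with hlt | heq
      · exact hlt
      · exfalso; apply hMne; rw [← heq]; exact xi_zero I x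
    rcases lt_or_gt_of_ne hMne with hneg | hpos
    · -- ξ(M) < 0 : apply aux_pos to -x
      have hpos' : 0 < xiMap I (fun i => -x i) M := by rw [xi_negfun]; omega
      have hbound' : ∀ j ∈ I, xiMap I (fun i => -x i) ((fun i => -x i) j) ≠ 0 →
          |(fun i => -x i) j| ≤ M := by
        intro j hj hne
        simp only [abs_neg]
        apply hbound j hj
        rw [xi_negfun, xi_neg, neg_neg] at hne
        simpa using hne
      obtain ⟨p1, p2⟩ := aux_pos I (fun i => -x i) M hM hpos' hbound'
      constructor
      · intro i hi
        have h1 := p1 i hi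
        rw [Fop_negfun I x, Fop_negfun (I.erase i) x] at h1
        simp only [Set.mem_insert_iff, Set.mem_singleton_iff] at h1 ⊢
        rw [bop_negfun (x i) (Fop (I.erase i) x)] at h1
        rcases h1 with h1 | h1
        · exact Or.inl (neg_eq_zero.1 h1)
        · exact Or.inr (neg_injective h1)
      · have hfun : (fun i => bop (-x i) (Fop (I.erase i) fun i => -x i))
            = fun i => -(bop (x i) (Fop (I.erase i) x)) := by
          funext i
          rw [Fop_negfun]
          exact bop_negfun (x i) (Fop (I.erase i) x)
        rw [hfun, Fop_negfun I x,
            Fop_negfun I (fun i => bop (x i) (Fop (I.erase i) x))] at p2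
        exact neg_injective p2
    · exact aux_pos I x M hM hpos hbound
end

section
/- The map d_⊞(x,y) = max_{i∈[n]} |x_i ⊟ y_i| is an ultrametric on ℝⁿ: for all x, y, z ∈ ℝⁿ, (1) d_⊞(x,y) = d_⊞(y,x); (2) d_⊞(x,y) = 0 if and only if x = y; (3) d_⊞(x,y) ≤ max{d_⊞(x,z), d_⊞(z,y)}. -/
open Filter Finset

lemma f_eq (a b : ℝ) :
    |bop a (-b)| = if |a| = |b| then |a - b| / 2 else max |a| |b| := by
  unfold bop
  rcases lt_trichotomy |a| |b| with h|h|h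
  · rw [abs_neg, if_neg (not_lt.mpr h.le), if_pos h, if_neg (ne_of_lt h),
      abs_neg, max_eq_right h.le]
  · rw [abs_neg, if_neg (not_lt.mpr h.ge), if_neg (not_lt.mpr h.le), if_pos h]
    rw [abs_div, abs_two, sub_eq_add_neg]
  · rw [abs_neg, if_pos h, if_neg (ne_of_gt h), max_eq_left h.le]

lemma f_symm (a b : ℝ) : |bop a (-b)| = |bop b (-a)| := by
  rw [f_eq, f_eq, abs_sub_comm, max_comm]
  by_cases h : |a| = |b|
  · rw [if_pos h, if_pos h.symm]
  · rw [if_neg h, if_neg (Ne.symm h)]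

lemma f_zero (a b : ℝ) : |bop a (-b)| = 0 ↔ a = b := by
  rw [f_eq]
  split_ifs with h
  · constructor
    · intro h0; have : |a - b| = 0 := by linarith [abs_nonneg (a - b)]
      have := abs_eq_zero.mp this; linarith
    · intro h0; simp [h0]
  · constructor
    · intro h0
      have ha : |a| = 0 := le_antisymm (h0 ▸ le_max_left _ _) (abs_nonneg a)
      have hb : |b| = 0 := le_antisymm (h0 ▸ le_max_right _ _) (abs_nonneg b)
      exact absurd (ha.trans hb.symm) h
    · intro h0; exact absurd (by rw [h0]) h

lemma f_ult (a b c : ℝ) :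
    |bop a (-b)| ≤ max |bop a (-c)| |bop c (-b)| := by
  have tri : |a - b| ≤ |a| + |b| := abs_sub a b
  rw [f_eq, f_eq, f_eq]
  by_cases hab : |a| = |b| <;> by_cases hac : |a| = |c| <;> by_cases hcb : |c| = |b|
  · simp only [if_pos hab, if_pos hac, if_pos hcb]
    rcases abs_eq_abs.mp hac with h|h
    · rw [h]; exact le_max_right _ _
    · have hc : |a - c| = 2 * |a| := by
        rw [show c = -a by linarith, sub_neg_eq_add, ← two_mul, abs_mul, abs_two]
      have : |a - b| / 2 ≤ |a - c| / 2 := by rw [hc]; linarith [hab ▸ tri]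
      exact this.trans (le_max_left _ _)
  · exact absurd (hac.symm.trans hab) hcb
  · exact absurd (hab.trans hcb.symm) hac
  · simp only [if_pos hab, if_neg hac, if_neg hcb]
    have : |a - b| / 2 ≤ |a| := by linarith [hab ▸ tri]
    exact this.trans ((le_max_left _ _).trans (le_max_left _ _))
  · exact absurd (hac.trans hcb) hab
  · simp only [if_neg hab, if_pos hac, if_neg hcb]
    rw [hac]; exact le_max_right _ _
  · simp only [if_neg hab, if_neg hac, if_pos hcb]
    rw [← hcb]; exact le_max_left _ _
  · simp only [if_neg hab, if_neg hac, if_neg hcb]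
    exact max_le ((le_max_left _ _).trans (le_max_left _ _))
      ((le_max_right _ _).trans (le_max_right _ _))

/-- `d_⊞` is an ultrametric on ℝⁿ. -/
theorem stmt7 (n : ℕ) (x y z : Fin n → ℝ) :
    dB x y = dB y x ∧ (dB x y = 0 ↔ x = y) ∧ dB x y ≤ max (dB x z) (dB z y) := by
  have bdd : ∀ (f : Fin n → ℝ), BddAbove (Set.range f) :=
    fun f => (Set.finite_range f).bddAbove
  unfold dB
  refine ⟨iSup_congr fun i => f_symm _ _, ?_, ?_⟩
  · rcases Nat.eq_zero_or_pos n with hn | hn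
    · subst hn
      simp only [Real.iSup_of_isEmpty, true_iff]
      funext i; exact i.elim0
    · haveI : Nonempty (Fin n) := ⟨⟨0, hn⟩⟩
      constructor
      · intro h; funext i
        have hle : |bop (x i) (-(y i))| ≤ 0 := h ▸ le_ciSup (f := fun j => |bop (x j) (-(y j))|) (bdd _) i
        exact (f_zero _ _).mp (le_antisymm hle (abs_nonneg _))
      · intro h; subst h
        refine le_antisymm (ciSup_le fun i => ((f_zero _ _).mpr rfl).le) ?_
        exact (abs_nonneg _).trans (le_ciSup (f := fun j => |bop (x j) (-(x j))|) (bdd _) (Classical.arbitrary _))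
  · refine Real.iSup_le (fun i => ?_)
      (le_max_of_le_left (Real.iSup_nonneg fun i => abs_nonneg _))
    exact (f_ult _ _ _).trans
      (max_le_max (le_ciSup (f := fun j => |bop (x j) (-(z j))|) (bdd _) i) (le_ciSup (f := fun j => |bop (z j) (-(y j))|) (bdd _) i))
end

section
/- Let {x^{(k)}}_{k∈ℕ} be a sequence in ℝⁿ and x ∈ ℝⁿ with d_⊞(x^{(k)}, x) → 0 as k → ∞. Then there exists k₀ ∈ ℕ such that for all k ≥ k₀ and every index i with x_i ≠ 0 one has x_i^{(k)} = x_i; moreover, for every index i with x_i = 0, x_i^{(k)} → 0 as k → ∞. -/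
open Filter Finset

lemma abs_le_bop_sub (u v : ℝ) (huv : u ≠ v) : |v| ≤ |bop u (-v)| := by
  unfold bop
  rw [abs_neg]
  by_cases h1 : |v| < |u|
  · simp [h1]; linarith
  · by_cases h2 : |u| < |v|
    · simp [h1, h2]
    · have hmeq : |u| = |v| := le_antisymm (not_lt.1 h1) (not_lt.1 h2)
      rcases abs_eq_abs.1 hmeq with h | h
      · exact absurd h huv
      · simp only [h1, h2, if_false]
        have : (u + -v) / 2 = -v := by rw [h]; ring
        rw [this, abs_neg]

lemma abs_bop_zero (u : ℝ) : |bop u (-(0:ℝ))| = |u| := by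
  unfold bop
  by_cases hu : u = 0 <;> simp [hu, abs_pos.2, hu]

lemma le_dB {n : ℕ} (x y : Fin n → ℝ) (i : Fin n) :
    |bop (x i) (-(y i))| ≤ dB x y :=
  le_ciSup (Set.Finite.bddAbove (Set.finite_range fun j => |bop (x j) (-(y j))|)) i

/-- F-convergence implies eventual equality on nonzero coordinates
and ordinary convergence to 0 on zero coordinates. -/
theorem stmt8 (n : ℕ) (x : ℕ → Fin n → ℝ) (a : Fin n → ℝ)
    (h : Filter.Tendsto (fun k => dB (x k) a) Filter.atTop (nhds 0)) :
    (∃ k₀ : ℕ, ∀ k ≥ k₀, ∀ i, a i ≠ 0 → x k i = a i) ∧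
    (∀ i, a i = 0 → Filter.Tendsto (fun k => x k i) Filter.atTop (nhds 0)) := by
  constructor
  · set S := Finset.univ.filter (fun i : Fin n => a i ≠ 0) with hS
    by_cases hSne : S.Nonempty
    · set ε := S.inf' hSne (fun i => |a i|) with hε
      have hεpos : 0 < ε := by
        apply Finset.lt_inf'_iff hSne |>.2
        intro i hi
        have : a i ≠ 0 := (Finset.mem_filter.1 hi).2
        exact abs_pos.2 this
      have hev : ∀ᶠ k in Filter.atTop, dB (x k) a < ε :=
        h.eventually_lt_const hεpos
      obtain ⟨k₀, hk₀⟩ := Filter.eventually_atTop.1 hev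
      refine ⟨k₀, fun k hk i hai => ?_⟩
      by_contra hne
      have h1 : |a i| ≤ |bop (x k i) (-(a i))| := abs_le_bop_sub _ _ hne
      have h2 := le_dB (x k) a i
      have h3 : ε ≤ |a i| := Finset.inf'_le _ (by simp [hS, hai])
      have := hk₀ k hk
      linarith
    · exact ⟨0, fun k _ i hai => absurd (Finset.mem_filter.2 ⟨Finset.mem_univ i, hai⟩)
        (fun hmem => hSne ⟨i, hmem⟩)⟩
  · intro i hai
    apply squeeze_zero_norm (fun k => ?_) h
    have := le_dB (x k) a i
    rwa [hai, abs_bop_zero] at this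
end

section
/- For every x ∈ ℝⁿ, every α ≥ 0 and every z ∈ ℝⁿ: d_⊞(x,z) ≤ α if and only if for every index k, z_k = x_k whenever |x_k| > α, and |z_k| ≤ α whenever |x_k| ≤ α. (In particular, the closed ultrametric ball B_⊞(x,α] is a Cartesian product of a box with a point: it equals {x} when α is smaller than every nonzero |x_i|, and equals the Chebyshev ball {z : ‖z‖_∞ ≤ α} when α ≥ ‖x‖_∞.) -/
open Filter Finset

lemma key_bop (α a b : ℝ) (hα : 0 ≤ α) :
    |bop a (-b)| ≤ α ↔ (α < |a| → b = a) ∧ (|a| ≤ α → |b| ≤ α) := by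
  unfold bop
  rw [abs_neg]
  rcases lt_trichotomy |b| |a| with h | h | h
  · rw [if_pos h]
    constructor
    · intro hle
      exact ⟨fun hlt => absurd hlt (not_lt.mpr hle), fun ha => le_trans h.le ha⟩
    · rintro ⟨h1, h2⟩
      by_contra hc
      push_neg at hc
      have := h1 hc
      subst this
      exact lt_irrefl _ h
  · rw [if_neg (by rw [h]; exact lt_irrefl _), if_neg (by rw [h]; exact lt_irrefl _)]
    rcases abs_eq_abs.mp h with hb | hb
    · rw [hb]
      have h0 : (a + -a) / 2 = 0 := by ring
      rw [h0, abs_zero]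
      exact ⟨fun _ => ⟨fun _ => rfl, fun ha => ha⟩, fun _ => hα⟩
    · rw [hb]
      have : (a + -(-a)) / 2 = a := by ring
      rw [this]
      constructor
      · intro hle
        refine ⟨fun hlt => absurd hlt (not_lt.mpr hle), fun _ => ?_⟩
        rwa [abs_neg]
      · rintro ⟨h1, h2⟩
        by_contra hc
        push_neg at hc
        have := h1 hc
        have ha0 : a = 0 := by linarith
        rw [ha0, abs_zero] at hc
        exact absurd hα (not_le.mpr hc)
  · rw [if_neg (not_lt.mpr h.le), if_pos h, abs_neg]
    constructor
    · intro hle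
      exact ⟨fun hlt => (by linarith : False).elim, fun _ => hle⟩
    · rintro ⟨h1, h2⟩
      by_contra hc
      push_neg at hc
      have haα : α < |a| := by
        by_contra hc2
        push_neg at hc2
        exact absurd (h2 hc2) (not_le.mpr hc)
      have := h1 haα
      subst this
      exact lt_irrefl _ h

/-- description of the closed ultrametric ball `B_⊞(x,α]`. -/
theorem stmt9 (n : ℕ) (x z : Fin n → ℝ) (α : ℝ) (hα : 0 ≤ α) :
    dB x z ≤ α ↔ ∀ k, (α < |x k| → z k = x k) ∧ (|x k| ≤ α → |z k| ≤ α) := by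
  have hiff : ∀ i : Fin n, (|bop (x i) (-(z i))| ≤ α ↔ (α < |x i| → z i = x i) ∧ (|x i| ≤ α → |z i| ≤ α)) :=
    fun i => key_bop α (x i) (z i) hα
  rcases Nat.eq_zero_or_pos n with hn | hn
  · subst hn
    constructor
    · intro _ k; exact k.elim0
    · intro _
      unfold dB
      rw [Real.iSup_of_isEmpty]
      exact hα
  · have : Nonempty (Fin n) := ⟨⟨0, hn⟩⟩
    unfold dB
    rw [ciSup_le_iff (Set.Finite.bddAbove (Set.finite_range _))]
    exact forall_congr' hiff
end
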